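/- arXiv:1409.3453 — 6 statements merged into one kernel-verified Lean document; each statement's English description precedes it below -/
import Mathlib

section
/- With M the Kronig–Penney single-cell transfer matrix (with 0 < E < V, k = √E, z = √(V−E)) and Φ := Re(m₁₁) = cos(kδ)cosh(zλ) + ((z²−k²)/(2kz))·sin(kδ)sinh(zλ), the transmission coefficient S_N := 1/|(M^N)₁₁|² satisfies, for every N ≥ 1, S_N = [1 + ((V/(2kz))·sinh(zλ)·U_{N−1}(Φ))²]^{−1}, where U_{N−1} is the (N−1)-th Chebyshev polynomial of the second kind. -/
open Real Complex Polynomial Polynomial.Chebyshev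

/-- The transmission coefficient `S_N = 1/|(M^N)₁₁|²` of the `N`-cell Kronig–Penney model
equals `[1 + ((V/(2kz)) sinh(zλ) U_{N−1}(Φ))²]⁻¹`, where `Φ = Re m₁₁` and `U` are the
Chebyshev polynomials of the second kind. -/
theorem KP_transmission_coefficient (E V δ lam : ℝ) (hE : 0 < E) (hEV : E < V)
    (hδ : 0 < δ) (hlam : 0 < lam) (k z : ℝ) (hk : k = Real.sqrt E) (hz : z = Real.sqrt (V - E))
    (m₁₁ m₁₂ : ℂ) (Φ : ℝ)
    (hΦ : Φ = Real.cos (k * δ) * Real.cosh (z * lam)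
        + (z ^ 2 - k ^ 2) / (2 * k * z) * Real.sin (k * δ) * Real.sinh (z * lam))
    (h11 : m₁₁ = ((Φ : ℝ) : ℂ)
      + Complex.I * ((- Real.sin (k * δ) * Real.cosh (z * lam)
        + (z ^ 2 - k ^ 2) / (2 * k * z) * Real.cos (k * δ) * Real.sinh (z * lam) : ℝ) : ℂ))
    (h12 : m₁₂ = ((V / (2 * k * z) : ℝ) : ℂ)
      * (((Real.sin (k * δ) : ℝ) : ℂ) + Complex.I * ((Real.cos (k * δ) : ℝ) : ℂ))
      * ((Real.sinh (z * lam) : ℝ) : ℂ))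
    (M : Matrix (Fin 2) (Fin 2) ℂ)
    (hM : M = Matrix.of !![m₁₁, m₁₂; starRingEnd ℂ m₁₂, starRingEnd ℂ m₁₁])
    (N : ℕ) (hN : 1 ≤ N) :
    1 / ‖(M ^ N) 0 0‖ ^ 2
      = (1 + (V / (2 * k * z) * Real.sinh (z * lam)
          * (U ℝ ((N : ℤ) - 1)).eval Φ) ^ 2)⁻¹ := by
  replace hM : M = !![m₁₁, m₁₂; starRingEnd ℂ m₁₂, starRingEnd ℂ m₁₁] := hM
  have hk0 : 0 < k := by rw [hk]; exact Real.sqrt_pos.2 hE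
  have hz0 : 0 < z := by rw [hz]; exact Real.sqrt_pos.2 (by linarith)
  have hk2 : k ^ 2 = E := by rw [hk, sq, Real.mul_self_sqrt hE.le]
  have hz2 : z ^ 2 = V - E := by rw [hz, sq, Real.mul_self_sqrt (by linarith)]
  have hkz : (2 * k * z) ≠ 0 := by positivity
  set a : ℝ := V / (2 * k * z) with ha
  set c : ℝ := (z ^ 2 - k ^ 2) / (2 * k * z) with hc
  set S := Real.sin (k * δ); set C := Real.cos (k * δ)
  set Sh := Real.sinh (z * lam); set Ch := Real.cosh (z * lam)
  set B : ℝ := -S * Ch + c * C * Sh with hB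
  have hSC : S ^ 2 + C ^ 2 = 1 := Real.sin_sq_add_cos_sq _
  have hSCc : (S : ℂ) ^ 2 + (C : ℂ) ^ 2 = 1 := by exact_mod_cast congrArg Complex.ofReal hSC
  have hCh : Ch ^ 2 - Sh ^ 2 = 1 := Real.cosh_sq_sub_sinh_sq _
  have hac : a ^ 2 = c ^ 2 + 1 := by
    rw [ha, hc, div_pow, div_pow, div_add' _ _ _ (by positivity)]
    congr 1
    nlinarith [hk2, hz2]
  have hΦ' : Φ = C * Ch + c * S * Sh := hΦ
  have hdetR : Φ ^ 2 + B ^ 2 - (a * Sh) ^ 2 = 1 := by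
    rw [hΦ', hB]
    linear_combination (Ch ^ 2 + c ^ 2 * Sh ^ 2) * hSC - Sh ^ 2 * hac + hCh
  have hconj11 : (starRingEnd ℂ) m₁₁ = ((Φ : ℂ)) - Complex.I * (B : ℂ) := by
    rw [h11]; simp [Complex.ext_iff]
  have hconj12 : (starRingEnd ℂ) m₁₂ = (a : ℂ) * ((S : ℂ) - Complex.I * (C : ℂ)) * (Sh : ℂ) := by
    rw [h12]; simp [Complex.ext_iff]
  have h11' : m₁₁ = ((Φ : ℂ)) + Complex.I * (B : ℂ) := h11
  have htr : m₁₁ + starRingEnd ℂ m₁₁ = 2 * (Φ : ℂ) := by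
    rw [hconj11, h11']; ring
  have hns11 : m₁₁ * starRingEnd ℂ m₁₁ = (((Φ ^ 2 + B ^ 2 : ℝ)) : ℂ) := by
    rw [hconj11, h11']; push_cast
    linear_combination (-(B : ℂ) ^ 2) * Complex.I_sq
  have hns12 : m₁₂ * starRingEnd ℂ m₁₂ = (((a * Sh) ^ 2 : ℝ) : ℂ) := by
    rw [hconj12, h12]; push_cast
    linear_combination ((a : ℂ) ^ 2 * (Sh : ℂ) ^ 2) * hSCc
      - ((a : ℂ) ^ 2 * (Sh : ℂ) ^ 2 * (C : ℂ) ^ 2) * Complex.I_sq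
  have hdet : m₁₁ * starRingEnd ℂ m₁₁ - m₁₂ * starRingEnd ℂ m₁₂ = 1 := by
    rw [hns11, hns12]
    have : ((Φ ^ 2 + B ^ 2 : ℝ) : ℂ) - (((a * Sh) ^ 2 : ℝ) : ℂ)
        = (((Φ ^ 2 + B ^ 2 - (a * Sh) ^ 2 : ℝ)) : ℂ) := by push_cast; ring
    rw [this, hdetR]; norm_num
  -- Cayley–Hamilton for M
  have hM2 : M ^ 2 = (2 * (Φ : ℂ)) • M - 1 := by
    rw [hM]
    ext i j
    fin_cases i <;> fin_cases j <;>
      simp [pow_two, Matrix.mul_apply, Fin.sum_univ_two, Matrix.one_apply] <;>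
      first
        | linear_combination m₁₁ * htr - hdet
        | linear_combination m₁₂ * htr
        | linear_combination (starRingEnd ℂ m₁₂) * htr
        | linear_combination (starRingEnd ℂ m₁₁) * htr - hdet
  -- powers of M via Chebyshev U
  have key : ∀ n : ℕ, M ^ n
      = (((U ℝ ((n : ℤ) - 1)).eval Φ : ℝ) : ℂ) • M
        - (((U ℝ ((n : ℤ) - 2)).eval Φ : ℝ) : ℂ) • (1 : Matrix (Fin 2) (Fin 2) ℂ) := by
    intro n
    induction n with
    | zero =>
        simp [U_neg_one, U_neg_two]
    | succ n ih =>
        have hrec : (U ℝ ((n : ℤ) + 1 - 1)).eval Φ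
            = 2 * Φ * (U ℝ ((n : ℤ) - 1)).eval Φ - (U ℝ ((n : ℤ) - 2)).eval Φ := by
          have := Polynomial.Chebyshev.U_add_two ℝ ((n : ℤ) - 2)
          have h2 : ((n : ℤ) - 2 + 2) = ((n : ℤ) + 1 - 1) := by ring
          rw [h2] at this
          have h3 : ((n : ℤ) - 2 + 1) = ((n : ℤ) - 1) := by ring
          rw [h3] at this
          rw [this]
          simp [Polynomial.eval_mul, Polynomial.eval_sub]
        have hsq : M * M = (2 * (Φ : ℂ)) • M - 1 := by rw [← pow_two]; exact hM2
        have h4 : ((n : ℤ) + 1 - 2) = ((n : ℤ) - 1) := by ring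
        rw [pow_succ, ih, Matrix.sub_mul, Matrix.smul_mul, Matrix.smul_mul,
          Matrix.one_mul, hsq, show (((n + 1 : ℕ) : ℤ)) = (n : ℤ) + 1 by push_cast; ring,
          hrec, h4]
        push_cast
        module
  have hMN := key N
  set u : ℝ := (U ℝ ((N : ℤ) - 1)).eval Φ with hu
  set v : ℝ := (U ℝ ((N : ℤ) - 2)).eval Φ with hv
  have hE00 : (M ^ N) 0 0 = (u : ℂ) * m₁₁ - (v : ℂ) := by
    rw [hMN, hM]; simp [Matrix.sub_apply, Matrix.smul_apply, Matrix.one_apply, smul_eq_mul]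
  have hE11 : (M ^ N) 1 1 = (u : ℂ) * starRingEnd ℂ m₁₁ - (v : ℂ) := by
    rw [hMN, hM]; simp [Matrix.sub_apply, Matrix.smul_apply, Matrix.one_apply, smul_eq_mul]
  have hE01 : (M ^ N) 0 1 = (u : ℂ) * m₁₂ := by
    rw [hMN, hM]; simp [Matrix.sub_apply, Matrix.smul_apply, Matrix.one_apply, smul_eq_mul]
  have hE10 : (M ^ N) 1 0 = (u : ℂ) * starRingEnd ℂ m₁₂ := by
    rw [hMN, hM]; simp [Matrix.sub_apply, Matrix.smul_apply, Matrix.one_apply, smul_eq_mul]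
  -- determinant of M^N is 1
  have hdetM : M.det = 1 := by
    rw [hM, Matrix.det_fin_two]
    simpa using hdet
  have hdetMN : (M ^ N).det = 1 := by rw [Matrix.det_pow, hdetM, one_pow]
  have hdetMN' : (M ^ N) 0 0 * (M ^ N) 1 1 - (M ^ N) 0 1 * (M ^ N) 1 0 = 1 := by
    rw [← Matrix.det_fin_two]; exact hdetMN
  -- conclude: normSq of entry
  have hconj00 : starRingEnd ℂ ((M ^ N) 0 0) = (u : ℂ) * starRingEnd ℂ m₁₁ - (v : ℂ) := by
    rw [hE00]; simp
  have hnormSq : (Complex.normSq ((M ^ N) 0 0) : ℂ) = 1 + ((u * (a * Sh)) ^ 2 : ℝ) := by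
    rw [← Complex.mul_conj, hconj00, hE00]
    rw [hE00, hE11, hE01, hE10] at hdetMN'
    push_cast
    have hns12' : m₁₂ * starRingEnd ℂ m₁₂ = ((a : ℂ)) ^ 2 * ((Sh : ℂ)) ^ 2 := by
      rw [hns12]; push_cast; ring
    linear_combination hdetMN' + (u : ℂ) ^ 2 * hns12'
  have hnormSqR : Complex.normSq ((M ^ N) 0 0) = 1 + (u * (a * Sh)) ^ 2 := by
    exact_mod_cast hnormSq
  rw [← Complex.sq_norm] at hnormSqR
  rw [one_div, hnormSqR]
  congr 1
  ring
end

section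
/- Fix γ, L > 0 and reals 0 < E < V, and set δ_N = L/((1+γ)N), λ_N = γL/((1+γ)N), k = √E, z = √(V−E), E₀ = γV/(1+γ). Define Φ_N = cos(kδ_N)cosh(zλ_N) + ((z²−k²)/(2kz))·sin(kδ_N)sinh(zλ_N). Then N²·(1 − Φ_N) converges to (E − E₀)·L²/2 as N → ∞. -/
open Real Filter

private lemma sin_div_lim : Tendsto (fun u : ℝ => Real.sin u / u)
    (nhdsWithin 0 {0}ᶜ) (nhds 1) := by
  have h := Real.hasDerivAt_sin 0
  rw [hasDerivAt_iff_tendsto_slope] at h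
  simpa [slope_fun_def, Real.cos_zero, div_eq_inv_mul] using h

private lemma sinh_div_lim : Tendsto (fun u : ℝ => Real.sinh u / u)
    (nhdsWithin 0 {0}ᶜ) (nhds 1) := by
  have h := Real.hasDerivAt_sinh 0
  rw [hasDerivAt_iff_tendsto_slope] at h
  simpa [slope_fun_def, Real.cosh_zero, div_eq_inv_mul] using h

private lemma cos_half_sq (x : ℝ) : Real.cos x = 1 - 2 * Real.sin (x / 2) ^ 2 := by
  have h := Real.cos_two_mul (x / 2)
  rw [show (2:ℝ) * (x / 2) = x by ring] at h
  nlinarith [Real.sin_sq_add_cos_sq (x / 2)]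

private lemma cosh_half_sq (x : ℝ) : Real.cosh x = 1 + 2 * Real.sinh (x / 2) ^ 2 := by
  have h := Real.cosh_two_mul (x / 2)
  rw [show (2:ℝ) * (x / 2) = x by ring] at h
  have h2 := Real.cosh_sq (x / 2)
  nlinarith

private lemma scale_lim (m : ℝ) (hm : m ≠ 0) :
    Tendsto (fun t : ℝ => m * t) (nhdsWithin 0 {0}ᶜ) (nhdsWithin 0 {0}ᶜ) := by
  rw [tendsto_nhdsWithin_iff]
  constructor
  · have : Tendsto (fun t : ℝ => m * t) (nhds 0) (nhds (m * 0)) :=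
      (continuous_const.mul continuous_id).tendsto 0
    simpa using this.mono_left nhdsWithin_le_nhds
  · filter_upwards [eventually_mem_nhdsWithin] with t ht
    exact fun h => ht (by simpa using (mul_eq_zero.1 h).resolve_left hm)

/-- In the continuum limit `δ_N = L/((1+γ)N)`, `λ_N = γL/((1+γ)N)`, the half-trace
`Φ_N` of the Kronig–Penney single-cell transfer matrix satisfies
`N²(1 − Φ_N) → (E − E₀)L²/2`, where `E₀ = γV/(1+γ)`. -/
theorem KP_phi_asymptotics (γ L E V : ℝ) (hγ : 0 < γ) (hL : 0 < L)
    (hE : 0 < E) (hEV : E < V) (k z E₀ : ℝ)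
    (hk : k = Real.sqrt E) (hz : z = Real.sqrt (V - E)) (hE₀ : E₀ = γ * V / (1 + γ))
    (δ lam Φ : ℕ → ℝ)
    (hδ : ∀ N, δ N = L / ((1 + γ) * N)) (hlam : ∀ N, lam N = γ * L / ((1 + γ) * N))
    (hΦ : ∀ N, Φ N = Real.cos (k * δ N) * Real.cosh (z * lam N)
        + (z ^ 2 - k ^ 2) / (2 * k * z) * Real.sin (k * δ N) * Real.sinh (z * lam N)) :
    Tendsto (fun N : ℕ => (N : ℝ) ^ 2 * (1 - Φ N)) atTop (nhds ((E - E₀) * L ^ 2 / 2)) := by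
  have hγ1 : (0:ℝ) < 1 + γ := by linarith
  have hγ1' : (1:ℝ) + γ ≠ 0 := ne_of_gt hγ1
  have hkpos : 0 < k := hk ▸ Real.sqrt_pos.2 hE
  have hzpos : 0 < z := hz ▸ Real.sqrt_pos.2 (by linarith)
  have hk2 : k ^ 2 = E := by rw [hk, sq, Real.mul_self_sqrt hE.le]
  have hz2 : z ^ 2 = V - E := by rw [hz, sq, Real.mul_self_sqrt (by linarith)]
  set A : ℝ := k * L / (1 + γ) with hA
  set B : ℝ := z * (γ * L) / (1 + γ) with hB
  set c : ℝ := (z ^ 2 - k ^ 2) / (2 * k * z) with hc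
  have hAne : A ≠ 0 := by positivity
  have hBne : B ≠ 0 := by positivity
  -- the model function of a real variable
  set G : ℝ → ℝ := fun t =>
    (1 - (Real.cos (A * t) * Real.cosh (B * t)
      + c * Real.sin (A * t) * Real.sinh (B * t))) / t ^ 2 with hG
  -- limit of the structured form
  have hcoshlim : Tendsto (fun t : ℝ => Real.cosh (B * t)) (nhdsWithin 0 {0}ᶜ) (nhds 1) := by
    have : Tendsto (fun t : ℝ => Real.cosh (B * t)) (nhds 0) (nhds (Real.cosh (B * 0))) :=
      (Real.continuous_cosh.comp (continuous_const.mul continuous_id)).tendsto 0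
    simpa using this.mono_left nhdsWithin_le_nhds
  have h1 : Tendsto (fun t : ℝ => Real.sin (A * t / 2) / (A * t / 2))
      (nhdsWithin 0 {0}ᶜ) (nhds 1) := by
    have := sin_div_lim.comp (scale_lim (A / 2) (by positivity))
    refine this.congr fun t => ?_
    simp only [Function.comp]
    ring_nf
  have h2 : Tendsto (fun t : ℝ => Real.sinh (B * t / 2) / (B * t / 2))
      (nhdsWithin 0 {0}ᶜ) (nhds 1) := by
    have := sinh_div_lim.comp (scale_lim (B / 2) (by positivity))
    refine this.congr fun t => ?_
    simp only [Function.comp]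
    ring_nf
  have h3 : Tendsto (fun t : ℝ => Real.sin (A * t) / (A * t))
      (nhdsWithin 0 {0}ᶜ) (nhds 1) := by
    have := sin_div_lim.comp (scale_lim A hAne)
    exact this.congr fun t => by simp [Function.comp]
  have h4 : Tendsto (fun t : ℝ => Real.sinh (B * t) / (B * t))
      (nhdsWithin 0 {0}ᶜ) (nhds 1) := by
    have := sinh_div_lim.comp (scale_lim B hBne)
    exact this.congr fun t => by simp [Function.comp]
  have hHlim : Tendsto (fun t : ℝ =>
      A ^ 2 / 2 * (Real.sin (A * t / 2) / (A * t / 2)) ^ 2 * Real.cosh (B * t)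
      - B ^ 2 / 2 * (Real.sinh (B * t / 2) / (B * t / 2)) ^ 2
      - c * A * B * (Real.sin (A * t) / (A * t)) * (Real.sinh (B * t) / (B * t)))
      (nhdsWithin 0 {0}ᶜ)
      (nhds (A ^ 2 / 2 * 1 ^ 2 * 1 - B ^ 2 / 2 * 1 ^ 2 - c * A * B * 1 * 1)) := by
    exact (((tendsto_const_nhds.mul (h1.pow 2)).mul hcoshlim).sub
      (tendsto_const_nhds.mul (h2.pow 2))).sub
      (((tendsto_const_nhds.mul h3)).mul h4)
  -- G agrees with the structured form off 0
  have hGlim : Tendsto G (nhdsWithin 0 {0}ᶜ)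
      (nhds (A ^ 2 / 2 * 1 ^ 2 * 1 - B ^ 2 / 2 * 1 ^ 2 - c * A * B * 1 * 1)) := by
    refine hHlim.congr' ?_
    filter_upwards [eventually_mem_nhdsWithin] with t ht
    have htne : t ≠ 0 := ht
    simp only [hG]
    rw [cos_half_sq (A * t), cosh_half_sq (B * t)]
    field_simp
    ring
  -- identify the limit value
  have hval : A ^ 2 / 2 * 1 ^ 2 * 1 - B ^ 2 / 2 * 1 ^ 2 - c * A * B * 1 * 1
      = (E - E₀) * L ^ 2 / 2 := by
    have hV : V = z ^ 2 + k ^ 2 := by linarith [hz2, hk2]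
    rw [hA, hB, hc, hE₀, hV, ← hk2]
    field_simp
    ring
  rw [← hval]
  -- pass to the sequence
  have hseq : Tendsto (fun N : ℕ => (1 : ℝ) / N) atTop (nhdsWithin 0 {0}ᶜ) := by
    rw [tendsto_nhdsWithin_iff]
    refine ⟨tendsto_one_div_atTop_nhds_zero_nat, ?_⟩
    filter_upwards [eventually_gt_atTop 0] with N hN
    have : (0:ℝ) < N := by exact_mod_cast hN
    exact fun h => by simp at h; exact absurd h (by positivity)
  refine (hGlim.comp hseq).congr' ?_
  filter_upwards [eventually_gt_atTop 0] with N hN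
  have hNne : (N:ℝ) ≠ 0 := by
    have : (0:ℝ) < N := by exact_mod_cast hN
    exact ne_of_gt this
  simp only [Function.comp, hG, hΦ, hδ, hlam]
  rw [show k * (L / ((1 + γ) * N)) = A * (1 / N) by rw [hA]; field_simp,
    show z * (γ * L / ((1 + γ) * N)) = B * (1 / N) by rw [hB]; field_simp]
  field_simp
end

section
/- Fix γ, L > 0 and reals E₀ < E < V where E₀ = γV/(1+γ). Set δ_N = L/((1+γ)N), λ_N = γL/((1+γ)N), k = √E, z = √(V−E), Φ_N = cos(kδ_N)cosh(zλ_N) + ((z²−k²)/(2kz))sin(kδ_N)sinh(zλ_N), and ϑ = √(E−E₀). Then (U_{N−1}(Φ_N)/N)² converges to sin²(ϑL)/(ϑL)² as N → ∞ (with the convention sin(0)/0 = 1), where U_{N−1} are the Chebyshev polynomials of the second kind. -/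
open Real Filter Polynomial Polynomial.Chebyshev

lemma my_tendsto_sin_div : Tendsto (fun x : ℝ => Real.sin x / x) (nhdsWithin 0 {0}ᶜ) (nhds 1) := by
  have h := (Real.hasDerivAt_sin 0)
  rw [hasDerivAt_iff_tendsto_slope] at h
  simpa [slope_fun_def_field] using h

lemma my_tendsto_sinh_div : Tendsto (fun x : ℝ => Real.sinh x / x) (nhdsWithin 0 {0}ᶜ) (nhds 1) := by
  have h := (Real.hasDerivAt_sinh 0)
  rw [hasDerivAt_iff_tendsto_slope] at h
  simpa [slope_fun_def_field] using h

lemma half_mem : Tendsto (fun x : ℝ => x / 2) (nhdsWithin 0 {0}ᶜ) (nhdsWithin 0 {0}ᶜ) := by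
  rw [tendsto_nhdsWithin_iff]
  constructor
  · have h : Tendsto (fun x : ℝ => x / 2) (nhds 0) (nhds 0) := by
      simpa using (continuous_id.div_const (2:ℝ)).tendsto (0:ℝ)
    exact h.mono_left nhdsWithin_le_nhds
  · filter_upwards [self_mem_nhdsWithin] with x hx
    simpa using hx

lemma one_sub_cos_eq (x : ℝ) : 1 - Real.cos x = 2 * Real.sin (x/2) ^ 2 := by
  have h1 := Real.cos_two_mul' (x/2)
  have h2 := Real.sin_sq_add_cos_sq (x/2)
  have h : Real.cos x = Real.cos (2 * (x/2)) := by ring_nf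
  rw [h, h1]; linarith

lemma cosh_sub_one_eq (x : ℝ) : Real.cosh x - 1 = 2 * Real.sinh (x/2) ^ 2 := by
  have h1 := Real.cosh_two_mul (x/2)
  have h2 := Real.cosh_sq_sub_sinh_sq (x/2)
  have h : Real.cosh x = Real.cosh (2 * (x/2)) := by ring_nf
  rw [h, h1]; linarith

lemma my_tendsto_one_sub_cos :
    Tendsto (fun x : ℝ => (1 - Real.cos x) / x ^ 2) (nhdsWithin 0 {0}ᶜ) (nhds (1/2)) := by
  have h : Tendsto (fun x : ℝ => (Real.sin (x/2) / (x/2)) ^ 2 / 2) (nhdsWithin 0 {0}ᶜ)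
      (nhds (1/2)) := by
    have := ((my_tendsto_sin_div.comp half_mem).pow 2).div_const 2
    simpa using this
  refine h.congr' ?_
  filter_upwards [self_mem_nhdsWithin] with x hx
  have hx' : x ≠ 0 := by simpa using hx
  rw [one_sub_cos_eq]
  field_simp

lemma my_tendsto_cosh_sub_one :
    Tendsto (fun x : ℝ => (Real.cosh x - 1) / x ^ 2) (nhdsWithin 0 {0}ᶜ) (nhds (1/2)) := by
  have h : Tendsto (fun x : ℝ => (Real.sinh (x/2) / (x/2)) ^ 2 / 2) (nhdsWithin 0 {0}ᶜ)
      (nhds (1/2)) := by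
    have := ((my_tendsto_sinh_div.comp half_mem).pow 2).div_const 2
    simpa using this
  refine h.congr' ?_
  filter_upwards [self_mem_nhdsWithin] with x hx
  have hx' : x ≠ 0 := by simpa using hx
  rw [cosh_sub_one_eq]
  field_simp

lemma seq_mem (a : ℝ) (ha : a ≠ 0) :
    Tendsto (fun N : ℕ => a / N) atTop (nhdsWithin 0 {0}ᶜ) := by
  rw [tendsto_nhdsWithin_iff]
  constructor
  · simpa using tendsto_one_div_atTop_nhds_zero_nat.const_mul a |>.congr
      (fun N => by rw [mul_one_div])
  · filter_upwards [eventually_ge_atTop 1] with N hN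
    have h : (N:ℝ) ≠ 0 := Nat.cast_ne_zero.2 (by omega)
    simp [_root_.div_eq_zero_iff, ha, h]

/-- In the continuum limit, for `E₀ < E < V` with `ϑ = √(E−E₀)`,
`(U_{N−1}(Φ_N)/N)² → sin²(ϑL)/(ϑL)²`. -/
theorem KP_chebyshev_asymptotics (γ L E V : ℝ) (hγ : 0 < γ) (hL : 0 < L)
    (hV : 0 < V) (k z E₀ ϑ : ℝ)
    (hE₀ : E₀ = γ * V / (1 + γ)) (hE : E₀ < E) (hEV : E < V)
    (hk : k = Real.sqrt E) (hz : z = Real.sqrt (V - E)) (hϑ : ϑ = Real.sqrt (E - E₀))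
    (δ lam Φ : ℕ → ℝ)
    (hδ : ∀ N, δ N = L / ((1 + γ) * N)) (hlam : ∀ N, lam N = γ * L / ((1 + γ) * N))
    (hΦ : ∀ N, Φ N = Real.cos (k * δ N) * Real.cosh (z * lam N)
        + (z ^ 2 - k ^ 2) / (2 * k * z) * Real.sin (k * δ N) * Real.sinh (z * lam N)) :
    Tendsto (fun N : ℕ => ((U ℝ ((N : ℤ) - 1)).eval (Φ N) / (N : ℝ)) ^ 2) atTop
      (nhds (Real.sin (ϑ * L) ^ 2 / (ϑ * L) ^ 2)) := by
  have hγ1 : (0:ℝ) < 1 + γ := by linarith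
  have hE0pos : 0 < E₀ := by rw [hE₀]; positivity
  have hEpos : 0 < E := hE0pos.trans hE
  have hVE : 0 < V - E := by linarith
  have hkpos : 0 < k := by rw [hk]; exact Real.sqrt_pos.2 hEpos
  have hzpos : 0 < z := by rw [hz]; exact Real.sqrt_pos.2 hVE
  have hk2 : k ^ 2 = E := by rw [hk, Real.sq_sqrt hEpos.le]
  have hz2 : z ^ 2 = V - E := by rw [hz, Real.sq_sqrt hVE.le]
  have hϑpos : 0 < ϑ := by rw [hϑ]; exact Real.sqrt_pos.2 (by linarith)
  have hϑ2 : ϑ ^ 2 = E - E₀ := by rw [hϑ, Real.sq_sqrt (by linarith)]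
  have hϑL : 0 < ϑ * L := mul_pos hϑpos hL
  set a := k * L / (1 + γ) with ha
  set b := γ * z * L / (1 + γ) with hb
  set c := (z ^ 2 - k ^ 2) / (2 * k * z) with hc
  have hapos : 0 < a := by rw [ha]; positivity
  have hbpos : 0 < b := by rw [hb]; positivity
  have hΦ' : ∀ N : ℕ, Φ N = Real.cos (a/N) * Real.cosh (b/N)
      + c * Real.sin (a/N) * Real.sinh (b/N) := by
    intro N
    have hxa : k * δ N = a / N := by
      rw [hδ, ha]
      rcases Nat.eq_zero_or_pos N with h | h
      · simp [h]
      · have hN : (N:ℝ) ≠ 0 := Nat.cast_ne_zero.2 h.ne'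
        field_simp
        try ring
    have hxb : z * lam N = b / N := by
      rw [hlam, hb]
      rcases Nat.eq_zero_or_pos N with h | h
      · simp [h]
      · have hN : (N:ℝ) ≠ 0 := Nat.cast_ne_zero.2 h.ne'
        field_simp
        try ring
    rw [hΦ, hxa, hxb, hc]
  have hta := seq_mem a hapos.ne'
  have htb := seq_mem b hbpos.ne'
  have hta0 : Tendsto (fun N : ℕ => a/N) atTop (nhds 0) := hta.mono_right nhdsWithin_le_nhds
  have hconst : a ^ 2 / 2 - b ^ 2 / 2 - c * (a * b) = (ϑ * L) ^ 2 / 2 := by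
    have hE0' : E₀ * (1 + γ) = γ * V := by rw [hE₀]; field_simp
    rw [ha, hb, hc]
    have hkne : k ≠ 0 := hkpos.ne'
    have hzne : z ≠ 0 := hzpos.ne'
    have h1γ : (1+γ) ≠ 0 := hγ1.ne'
    have hkey : k^2 - γ*z^2 = (1+γ)*ϑ^2 := by
      linear_combination hk2 - γ*hz2 - (1+γ)*hϑ2 + hE0'
    field_simp
    linear_combination (1+γ) * hkey
  have hmain : Tendsto (fun N : ℕ => (N:ℝ)^2 * (1 - Φ N)) atTop (nhds ((ϑ*L)^2/2)) := by
    have hcosa : Tendsto (fun N : ℕ => Real.cos (a/N)) atTop (nhds 1) := by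
      have := (Real.continuous_cos.tendsto 0).comp hta0
      simpa [Function.comp_def] using this
    have h1 : Tendsto (fun N : ℕ =>
        a^2 * ((1 - Real.cos (a/N))/(a/N)^2)
        - Real.cos (a/N) * (b^2 * ((Real.cosh (b/N) - 1)/(b/N)^2))
        - c * ((a*b) * ((Real.sin (a/N)/(a/N)) * (Real.sinh (b/N)/(b/N))))) atTop
        (nhds (a^2 * (1/2) - 1 * (b^2 * (1/2)) - c * ((a*b) * (1*1)))) := by
      refine Tendsto.sub (Tendsto.sub ?_ ?_) ?_
      · exact (my_tendsto_one_sub_cos.comp hta).const_mul _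
      · exact hcosa.mul ((my_tendsto_cosh_sub_one.comp htb).const_mul _)
      · exact (((my_tendsto_sin_div.comp hta).mul
          (my_tendsto_sinh_div.comp htb)).const_mul (a*b)).const_mul c
    have h2 : a^2 * (1/2) - 1 * (b^2 * (1/2)) - c * ((a*b) * (1*1)) = (ϑ*L)^2/2 := by
      rw [← hconst]; ring
    rw [h2] at h1
    refine h1.congr' ?_
    filter_upwards [eventually_ge_atTop 1] with N hN
    have hN0 : (N:ℝ) ≠ 0 := Nat.cast_ne_zero.2 (by omega)
    rw [hΦ' N]
    field_simp
    ring
  have hΦ1 : Tendsto Φ atTop (nhds 1) := by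
    have hinv : Tendsto (fun N : ℕ => 1/(N:ℝ)^2) atTop (nhds 0) := by
      have := (tendsto_one_div_atTop_nhds_zero_nat (𝕜 := ℝ)).pow 2
      simpa [div_pow] using this
    have h2 := hmain.mul hinv
    rw [mul_zero] at h2
    have hsub : Tendsto (fun N : ℕ => 1 - Φ N) atTop (nhds 0) := by
      refine h2.congr' ?_
      filter_upwards [eventually_ge_atTop 1] with N hN
      have hN2 : ((N:ℝ)^2) ≠ 0 := by positivity
      rw [mul_one_div, mul_comm ((N:ℝ)^2) (1 - Φ N), mul_div_assoc, div_self hN2, mul_one]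
    have h3 := (tendsto_const_nhds (x := (1:ℝ)) (f := atTop)).sub hsub
    simpa using h3
  have hlt1 : ∀ᶠ N in atTop, Φ N < 1 := by
    have hpos := hmain.eventually (eventually_gt_nhds
      (show (0:ℝ) < (ϑ*L)^2/2 by positivity))
    filter_upwards [hpos, eventually_ge_atTop 1] with N h1 h2
    have hN2 : (0:ℝ) < (N:ℝ)^2 := by
      have : (0:ℝ) < (N:ℝ) := by exact_mod_cast h2
      positivity
    nlinarith
  have hgt1 : ∀ᶠ N in atTop, -1 < Φ N := hΦ1.eventually (eventually_gt_nhds (by norm_num))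
  set θ : ℕ → ℝ := fun N => Real.arccos (Φ N) with hθdef
  have hθ0 : Tendsto θ atTop (nhds 0) := by
    have := (Real.continuous_arccos.tendsto 1).comp hΦ1
    rw [Real.arccos_one] at this
    exact this
  have hcosθ : ∀ᶠ N in atTop, Real.cos (θ N) = Φ N := by
    filter_upwards [hlt1, hgt1] with N h1 h2
    exact Real.cos_arccos h2.le h1.le
  have hθpos : ∀ᶠ N in atTop, 0 < θ N := by
    filter_upwards [hlt1] with N h1
    exact Real.arccos_pos.2 h1
  have hθltpi : ∀ᶠ N in atTop, θ N < π := hθ0.eventually (eventually_lt_nhds Real.pi_pos)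
  have hsinθpos : ∀ᶠ N in atTop, 0 < Real.sin (θ N) := by
    filter_upwards [hθpos, hθltpi] with N h1 h2
    exact Real.sin_pos_of_pos_of_lt_pi h1 h2
  have hθmem : Tendsto θ atTop (nhdsWithin 0 {0}ᶜ) := by
    rw [tendsto_nhdsWithin_iff]
    refine ⟨hθ0, ?_⟩
    filter_upwards [hθpos] with N h
    simp [h.ne']
  have hNθsq : Tendsto (fun N : ℕ => ((N:ℝ) * θ N)^2) atTop (nhds ((ϑ*L)^2)) := by
    have hd := my_tendsto_one_sub_cos.comp hθmem
    have h := hmain.div hd (by norm_num)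
    have heq : ((ϑ*L)^2/2) / (1/2 : ℝ) = (ϑ*L)^2 := by ring
    rw [heq] at h
    refine h.congr' ?_
    filter_upwards [hcosθ, hθpos, hlt1] with N h1 h2 h3
    have hne : 1 - Φ N ≠ 0 := by
      have : 0 < 1 - Φ N := by linarith
      exact this.ne'
    have hθne : θ N ≠ 0 := h2.ne'
    try simp only [Pi.div_apply, Function.comp, Function.comp_apply]
    rw [h1]
    field_simp
  have hNθ : Tendsto (fun N : ℕ => (N:ℝ) * θ N) atTop (nhds (ϑ*L)) := by
    have h := (Real.continuous_sqrt.tendsto _).comp hNθsq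
    rw [Real.sqrt_sq hϑL.le] at h
    refine h.congr ?_
    intro N
    try simp only [Pi.div_apply, Function.comp, Function.comp_apply]
    exact Real.sqrt_sq (mul_nonneg (Nat.cast_nonneg N) (Real.arccos_nonneg _))
  have hnum : Tendsto (fun N : ℕ => Real.sin ((N:ℝ) * θ N)) atTop (nhds (Real.sin (ϑ*L))) :=
    (Real.continuous_sin.tendsto _).comp hNθ
  have hden : Tendsto (fun N : ℕ => (N:ℝ) * Real.sin (θ N)) atTop (nhds (ϑ*L)) := by
    have h := hNθ.mul (my_tendsto_sin_div.comp hθmem)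
    rw [mul_one] at h
    refine h.congr' ?_
    filter_upwards [hθpos] with N h2
    try simp only [Pi.div_apply, Function.comp, Function.comp_apply]
    field_simp [h2.ne']
    try ring
  have hfin := (hnum.div hden hϑL.ne').pow 2
  have hval : (Real.sin (ϑ*L) / (ϑ*L))^2 = Real.sin (ϑ*L)^2 / (ϑ*L)^2 := div_pow _ _ 2
  rw [hval] at hfin
  refine hfin.congr' ?_
  filter_upwards [hcosθ, hsinθpos] with N h1 h2
  have hU := Polynomial.Chebyshev.U_real_cos (θ N) ((N:ℤ) - 1)
  rw [h1] at hU
  have hcast : (((N:ℤ) - 1 : ℤ) : ℝ) + 1 = (N:ℝ) := by push_cast; ring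
  rw [hcast] at hU
  have hUeq : (U ℝ ((N:ℤ) - 1)).eval (Φ N) = Real.sin ((N:ℝ) * θ N) / Real.sin (θ N) := by
    rw [← hU]
    field_simp
  simp only [Pi.div_apply]
  rw [hUeq, div_div]
  ring
end

section
/- Fix γ, L > 0 and reals E, V with E₀ < E < V where E₀ = γV/(1+γ). With δ_N = L/((1+γ)N), λ_N = γL/((1+γ)N), k = √E, z = √(V−E), Φ_N as the real part of the (1,1) entry of the single-cell transfer matrix, and S_N = [1 + ((V/(2kz))·sinh(zλ_N)·U_{N−1}(Φ_N))²]^{−1}, the sequence S_N converges as N → ∞ to S̄ = [1 + (E₀²/(4E))·(sin(L√(E−E₀))/√(E−E₀))²]^{−1}. -/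
open Real Filter Polynomial Polynomial.Chebyshev

lemma KP_tendsto_nat_mul_comp {f : ℝ → ℝ} {f' : ℝ}
    (hf : HasDerivAt f f' 0) (h0 : f 0 = 0) (m : ℝ) :
    Tendsto (fun N : ℕ => (N : ℝ) * f (m / N)) atTop (nhds (f' * m)) := by
  rcases eq_or_ne m 0 with rfl | hm
  · have heq : (fun N : ℕ => (N:ℝ) * f (0 / N)) = fun _ => 0 := by
      funext N; simp [h0]
    rw [heq, mul_zero]
    exact tendsto_const_nhds
  · have hslope : Tendsto (fun y : ℝ => f y / y) (nhdsWithin 0 {x | x ≠ 0}) (nhds f') := by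
      have h := hasDerivAt_iff_tendsto_slope.mp hf
      refine h.congr fun y => ?_
      simp [slope_def_field, h0]
    have hcomp : Tendsto (fun N : ℕ => m / N) atTop (nhdsWithin 0 {x | x ≠ 0}) := by
      rw [tendsto_nhdsWithin_iff]
      refine ⟨tendsto_const_div_atTop_nhds_zero_nat m, ?_⟩
      filter_upwards [eventually_ge_atTop 1] with N hN
      have : (N:ℝ) ≠ 0 := Nat.cast_ne_zero.mpr (by omega)
      exact div_ne_zero hm this
    have h2 : Tendsto (fun N : ℕ => m * (f (m / N) / (m / N))) atTop (nhds (m * f')) :=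
      tendsto_const_nhds.mul (hslope.comp hcomp)
    rw [mul_comm f' m]
    refine h2.congr' ?_
    filter_upwards [eventually_ge_atTop 1] with N hN
    have hN' : (N:ℝ) ≠ 0 := Nat.cast_ne_zero.mpr (by omega)
    field_simp

lemma KP_limsin (m : ℝ) :
    Tendsto (fun N : ℕ => (N : ℝ) * Real.sin (m / N)) atTop (nhds m) := by
  simpa using KP_tendsto_nat_mul_comp (Real.hasDerivAt_sin 0) (by simp) m

lemma KP_limsinh (m : ℝ) :
    Tendsto (fun N : ℕ => (N : ℝ) * Real.sinh (m / N)) atTop (nhds m) := by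
  simpa using KP_tendsto_nat_mul_comp (Real.hasDerivAt_sinh 0) (by simp) m

lemma KP_limcos (m : ℝ) :
    Tendsto (fun N : ℕ => Real.cos (m / N)) atTop (nhds 1) := by
  have := (Real.continuous_cos.tendsto 0).comp (tendsto_const_div_atTop_nhds_zero_nat m)
  simpa [Function.comp_def] using this

lemma KP_limcosh (m : ℝ) :
    Tendsto (fun N : ℕ => Real.cosh (m / N)) atTop (nhds 1) := by
  have := (Real.continuous_cosh.tendsto 0).comp (tendsto_const_div_atTop_nhds_zero_nat m)
  simpa [Function.comp_def] using this

lemma KP_sin_sq_half (t : ℝ) : Real.sin (t / 2) ^ 2 = (1 - Real.cos t) / 2 := by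
  have h := Real.cos_two_mul' (t / 2)
  have h2 := Real.sin_sq_add_cos_sq (t / 2)
  rw [show 2 * (t / 2) = t by ring] at h
  nlinarith

lemma KP_sinh_sq_half (t : ℝ) : Real.sinh (t / 2) ^ 2 = (Real.cosh t - 1) / 2 := by
  have h := Real.cosh_two_mul (t / 2)
  have h2 := Real.cosh_sq (t / 2)
  rw [show 2 * (t / 2) = t by ring] at h
  nlinarith

/-- Continuum limit of the transmission coefficient: for `E₀ < E < V`,
`S_N → [1 + (E₀²/(4E))(sin(L√(E−E₀))/√(E−E₀))²]⁻¹`. -/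
theorem KP_transmission_continuum_limit (γ L E V : ℝ) (hγ : 0 < γ) (hL : 0 < L)
    (hV : 0 < V) (k z E₀ : ℝ)
    (hE₀ : E₀ = γ * V / (1 + γ)) (hE : E₀ < E) (hEV : E < V)
    (hk : k = Real.sqrt E) (hz : z = Real.sqrt (V - E))
    (δ lam Φ S : ℕ → ℝ)
    (hδ : ∀ N, δ N = L / ((1 + γ) * N)) (hlam : ∀ N, lam N = γ * L / ((1 + γ) * N))
    (hΦ : ∀ N, Φ N = Real.cos (k * δ N) * Real.cosh (z * lam N)
        + (z ^ 2 - k ^ 2) / (2 * k * z) * Real.sin (k * δ N) * Real.sinh (z * lam N))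
    (hS : ∀ N, S N = (1 + (V / (2 * k * z) * Real.sinh (z * lam N)
        * (U ℝ ((N : ℤ) - 1)).eval (Φ N)) ^ 2)⁻¹) :
    Tendsto S atTop (nhds ((1 + E₀ ^ 2 / (4 * E)
      * (Real.sin (L * Real.sqrt (E - E₀)) / Real.sqrt (E - E₀)) ^ 2)⁻¹)) := by
  have hγ1 : (0:ℝ) < 1 + γ := by linarith
  have hE0pos : 0 < E₀ := by rw [hE₀]; positivity
  have hEpos : 0 < E := hE0pos.trans hE
  have hkpos : 0 < k := by rw [hk]; exact Real.sqrt_pos.mpr hEpos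
  have hzpos : 0 < z := by rw [hz]; exact Real.sqrt_pos.mpr (by linarith)
  set w : ℝ := Real.sqrt (E - E₀) with hw
  have hwpos : 0 < w := Real.sqrt_pos.mpr (by linarith)
  have hk2 : k ^ 2 = E := by rw [hk, Real.sq_sqrt hEpos.le]
  have hz2 : z ^ 2 = V - E := by rw [hz, Real.sq_sqrt (by linarith)]
  have hw2 : w ^ 2 = E - E₀ := by rw [hw, Real.sq_sqrt (by linarith)]
  set a : ℝ := L / (1 + γ) with ha
  set b : ℝ := γ * L / (1 + γ) with hb
  have hapos : 0 < a := by positivity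
  have hbpos : 0 < b := by positivity
  have hδ' : ∀ N : ℕ, k * δ N = k * a / N := by
    intro N; rw [hδ, ha, mul_div_assoc', mul_div_assoc', div_div]
  have hlam' : ∀ N : ℕ, z * lam N = z * b / N := by
    intro N; rw [hlam, hb, mul_div_assoc', mul_div_assoc', div_div]
  -- limit of Φ
  have hΦlim : Tendsto Φ atTop (nhds 1) := by
    have h1 : Tendsto (fun N : ℕ => Real.sin (k * a / N)) atTop (nhds 0) := by
      have := (Real.continuous_sin.tendsto 0).comp (tendsto_const_div_atTop_nhds_zero_nat (k*a))
      simpa [Function.comp_def] using this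
    have h2 : Tendsto (fun N : ℕ => Real.sinh (z * b / N)) atTop (nhds 0) := by
      have := (Real.continuous_sinh.tendsto 0).comp (tendsto_const_div_atTop_nhds_zero_nat (z*b))
      simpa [Function.comp_def] using this
    have hmain : Tendsto (fun N : ℕ => Real.cos (k*a/N) * Real.cosh (z*b/N)
        + (z^2-k^2)/(2*k*z) * (Real.sin (k*a/N) * Real.sinh (z*b/N))) atTop
        (nhds (1*1 + (z^2-k^2)/(2*k*z) * (0*0))) :=
      ((KP_limcos _).mul (KP_limcosh _)).add (tendsto_const_nhds.mul (h1.mul h2))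
    have h' : Tendsto Φ atTop (nhds (1*1 + (z^2-k^2)/(2*k*z) * (0*0))) :=
      hmain.congr (fun N => by rw [hΦ, hδ', hlam']; ring)
    simpa using h'
  -- key quadratic limit
  have hA : Tendsto (fun N : ℕ => (N:ℝ)^2 * (1 - Φ N)) atTop (nhds ((w*L)^2/2)) := by
    have hident : ∀ N : ℕ, (N:ℝ)^2 * (1 - Φ N)
        = 2 * ((N:ℝ) * Real.sin ((k*a/2) / N))^2 * Real.cosh ((z*b)/N)
          - 2 * ((N:ℝ) * Real.sinh ((z*b/2) / N))^2
          - (z^2 - k^2)/(2*k*z) * (((N:ℝ) * Real.sin ((k*a)/N)) * ((N:ℝ) * Real.sinh ((z*b)/N))) := by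
      intro N
      have hx : (k*a/2) / N = ((k*a)/N) / 2 := by ring
      have hy : (z*b/2) / N = ((z*b)/N) / 2 := by ring
      rw [hΦ, hδ', hlam', hx, hy, mul_pow, mul_pow,
        KP_sin_sq_half ((k*a)/N), KP_sinh_sq_half ((z*b)/N)]
      ring
    have hlim : Tendsto (fun N : ℕ =>
        2 * ((N:ℝ) * Real.sin ((k*a/2) / N))^2 * Real.cosh ((z*b)/N)
          - 2 * ((N:ℝ) * Real.sinh ((z*b/2) / N))^2
          - (z^2 - k^2)/(2*k*z) * (((N:ℝ) * Real.sin ((k*a)/N)) * ((N:ℝ) * Real.sinh ((z*b)/N))))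
        atTop (nhds (2 * (k*a/2)^2 * 1 - 2 * (z*b/2)^2
          - (z^2 - k^2)/(2*k*z) * ((k*a) * (z*b)))) := by
      exact (((tendsto_const_nhds.mul ((KP_limsin (k*a/2)).pow 2)).mul (KP_limcosh (z*b))).sub
        (tendsto_const_nhds.mul ((KP_limsinh (z*b/2)).pow 2))).sub
        (tendsto_const_nhds.mul ((KP_limsin (k*a)).mul (KP_limsinh (z*b))))
    have hval : 2 * (k*a/2)^2 * 1 - 2 * (z*b/2)^2 - (z^2 - k^2)/(2*k*z) * ((k*a) * (z*b))
        = (w*L)^2/2 := by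
      have hkne : k ≠ 0 := hkpos.ne'
      have hzne : z ≠ 0 := hzpos.ne'
      have hγne : (1+γ) ≠ 0 := hγ1.ne'
      have hterm : (z^2 - k^2)/(2*k*z) * ((k*a) * (z*b)) = (z^2 - k^2)*(a*b)/2 := by
        field_simp
      calc 2 * (k*a/2)^2 * 1 - 2 * (z*b/2)^2 - (z^2 - k^2)/(2*k*z) * ((k*a) * (z*b))
          = k^2*a^2/2 - z^2*b^2/2 - (z^2-k^2)*(a*b)/2 := by rw [hterm]; ring
        _ = (w*L)^2/2 := by
            rw [hk2, hz2, mul_pow, hw2, hE₀, ha, hb]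
            field_simp
            ring
    rw [← hval]
    exact hlim.congr (fun N => (hident N).symm)
  -- eventual bounds on Φ
  have hΦlt1 : ∀ᶠ N : ℕ in atTop, Φ N < 1 := by
    have hpos : ∀ᶠ N : ℕ in atTop, 0 < (N:ℝ)^2 * (1 - Φ N) :=
      hA.eventually (eventually_gt_nhds (by positivity))
    filter_upwards [hpos, eventually_ge_atTop 1] with N h1 h2
    have hN : (0:ℝ) < (N:ℝ)^2 := by positivity
    nlinarith
  have hΦgt : ∀ᶠ N : ℕ in atTop, 0 < Φ N :=
    hΦlim.eventually (eventually_gt_nhds (by norm_num))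
  set θ : ℕ → ℝ := fun N => Real.arccos (Φ N) with hθ
  have hθlim : Tendsto θ atTop (nhds 0) := by
    have := (Real.continuous_arccos.tendsto 1).comp hΦlim
    simpa [hθ, Real.arccos_one, Function.comp_def] using this
  have hθpos : ∀ᶠ N : ℕ in atTop, 0 < θ N := by
    filter_upwards [hΦlt1] with N h
    exact Real.arccos_pos.mpr h
  have hθltpi2 : ∀ᶠ N : ℕ in atTop, θ N < π/2 := by
    filter_upwards [hΦgt] with N h
    exact Real.arccos_lt_pi_div_two.mpr h
  have hsinθpos : ∀ᶠ N : ℕ in atTop, 0 < Real.sin (θ N) := by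
    filter_upwards [hθpos, hθltpi2] with N h1 h2
    exact Real.sin_pos_of_pos_of_lt_pi h1 (h2.trans (by linarith [Real.pi_pos]))
  have hcosθ : ∀ᶠ N : ℕ in atTop, Real.cos (θ N) = Φ N := by
    filter_upwards [hΦgt, hΦlt1] with N h1 h2
    exact Real.cos_arccos (by linarith) h2.le
  -- N * sin θ N → w * L
  have hB : Tendsto (fun N : ℕ => (N:ℝ) * Real.sin (θ N)) atTop (nhds (w*L)) := by
    have hlim : Tendsto (fun N : ℕ => Real.sqrt (((N:ℝ)^2 * (1 - Φ N)) * (1 + Φ N)))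
        atTop (nhds (w*L)) := by
      have := (Real.continuous_sqrt.tendsto ((w*L)^2/2 * (1+1))).comp (hA.mul
        (tendsto_const_nhds.add hΦlim))
      have heq : Real.sqrt ((w*L)^2/2 * (1+1)) = w * L := by
        rw [show (w*L)^2/2 * (1+1) = (w*L)^2 by ring, Real.sqrt_sq (by positivity)]
      rw [heq] at this
      exact this
    refine hlim.congr' ?_
    filter_upwards [hΦgt, hΦlt1] with N h1 h2
    have h3 : Real.sin (θ N) = Real.sqrt (1 - (Φ N)^2) := Real.sin_arccos (Φ N)
    rw [h3, show ((N:ℝ)^2 * (1 - Φ N)) * (1 + Φ N) = (N:ℝ)^2 * (1 - (Φ N)^2) by ring,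
      Real.sqrt_mul (by positivity), Real.sqrt_sq (Nat.cast_nonneg N)]
  -- θ N / sin θ N → 1
  have hC : Tendsto (fun N : ℕ => θ N / Real.sin (θ N)) atTop (nhds 1) := by
    have hθin : Tendsto θ atTop (nhdsWithin 0 {x | x ≠ 0}) := by
      rw [tendsto_nhdsWithin_iff]
      refine ⟨hθlim, ?_⟩
      filter_upwards [hθpos] with N h
      exact h.ne'
    have hslope : Tendsto (fun y : ℝ => Real.sin y / y) (nhdsWithin 0 {x | x ≠ 0}) (nhds 1) := by
      have h := hasDerivAt_iff_tendsto_slope.mp (Real.hasDerivAt_sin 0)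
      rw [Real.cos_zero] at h
      refine h.congr fun y => ?_
      simp [slope_def_field]
    have := (hslope.comp hθin).inv₀ one_ne_zero
    rw [inv_one] at this
    refine this.congr fun N => ?_
    simp [inv_div]
  have hD : Tendsto (fun N : ℕ => (N:ℝ) * θ N) atTop (nhds (w*L)) := by
    have := hB.mul hC
    rw [mul_one] at this
    refine this.congr' ?_
    filter_upwards [hsinθpos] with N h
    field_simp
  have hE' : Tendsto (fun N : ℕ => Real.sin ((N:ℝ) * θ N)) atTop (nhds (Real.sin (w*L))) :=
    (Real.continuous_sin.tendsto _).comp hD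
  have hF : Tendsto (fun N : ℕ => (N:ℝ) * Real.sinh (z * lam N)) atTop (nhds (z*b)) := by
    refine (KP_limsinh (z*b)).congr fun N => ?_
    rw [hlam']
  -- main product limit
  have hP : Tendsto (fun N : ℕ => Real.sinh (z * lam N) * (U ℝ ((N:ℤ) - 1)).eval (Φ N))
      atTop (nhds (Real.sin (w*L) * (z*b) / (w*L))) := by
    have hlim : Tendsto (fun N : ℕ =>
        Real.sin ((N:ℝ) * θ N) * ((N:ℝ) * Real.sinh (z * lam N)) / ((N:ℝ) * Real.sin (θ N)))
        atTop (nhds (Real.sin (w*L) * (z*b) / (w*L))) :=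
      (hE'.mul hF).div hB (by positivity)
    refine hlim.congr' ?_
    filter_upwards [hsinθpos, hcosθ, eventually_ge_atTop 1] with N h1 h2 h3
    have hU : (U ℝ ((N:ℤ) - 1)).eval (Φ N) * Real.sin (θ N) = Real.sin ((N:ℝ) * θ N) := by
      have := Polynomial.Chebyshev.U_real_cos (θ N) ((N:ℤ) - 1)
      rw [h2] at this
      rw [this]
      norm_num
    have hNne : (N:ℝ) ≠ 0 := Nat.cast_ne_zero.mpr (by omega)
    have hsne : Real.sin (θ N) ≠ 0 := h1.ne'
    have heval : (U ℝ ((N:ℤ) - 1)).eval (Φ N) = Real.sin ((N:ℝ) * θ N) / Real.sin (θ N) := by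
      rw [eq_div_iff hsne]; exact hU
    rw [heval]
    field_simp
  -- conclude
  have hT : Tendsto (fun N : ℕ => V / (2*k*z) * Real.sinh (z * lam N)
      * (U ℝ ((N:ℤ) - 1)).eval (Φ N)) atTop
      (nhds (V / (2*k*z) * (Real.sin (w*L) * (z*b) / (w*L)))) := by
    refine Tendsto.congr (fun N => ?_) (hP.const_mul (V/(2*k*z)))
    ring
  set ℓ : ℝ := V / (2*k*z) * (Real.sin (w*L) * (z*b) / (w*L)) with hℓ
  have hfinal : Tendsto S atTop (nhds ((1 + ℓ^2)⁻¹)) := by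
    have hne : (1:ℝ) + ℓ^2 ≠ 0 := by positivity
    have := (tendsto_const_nhds.add (hT.pow 2)).inv₀ hne
    refine this.congr fun N => (hS N).symm
  have hval : (1 + ℓ^2)⁻¹ = (1 + E₀ ^ 2 / (4 * E)
      * (Real.sin (L * Real.sqrt (E - E₀)) / Real.sqrt (E - E₀)) ^ 2)⁻¹ := by
    have hkne : k ≠ 0 := hkpos.ne'
    have hzne : z ≠ 0 := hzpos.ne'
    have hγne : (1+γ) ≠ 0 := hγ1.ne'
    have hwne : w ≠ 0 := hwpos.ne'
    have hLne : L ≠ 0 := hL.ne'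
    have hℓval : ℓ = E₀ / (2*k) * (Real.sin (w*L) / w) := by
      rw [hℓ, hb, hE₀]
      field_simp
    have h4E : (2*k)^2 = 4*E := by rw [← hk2]; ring
    congr 2
    rw [hℓval, mul_comm L w, mul_pow, div_pow, h4E]
  rw [← hval]
  exact hfinal
end

section
/- Fix γ, L, V > 0 and E₀ = γV/(1+γ), and let 0 < E < E₀ (so E < V). With the notations δ_N = L/((1+γ)N), λ_N = γL/((1+γ)N), k = √E, z = √(V−E), and Φ_N = cos(kδ_N)cosh(zλ_N) + ((z²−k²)/(2kz))sin(kδ_N)sinh(zλ_N), there exists N₀ such that Φ_N > 1 for all N ≥ N₀. -/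
open Real

set_option maxHeartbeats 1000000


private lemma KP_cosh_bound {b : ℝ} (hb0 : 0 ≤ b) (hb1 : b ≤ 1) :
    |Real.cosh b - (1 + b ^ 2 / 2)| ≤ b ^ 4 * (5 / 96) := by
  have hb : |b| ≤ 1 := by rwa [abs_of_nonneg hb0]
  have hnb : |(-b)| ≤ 1 := by rwa [abs_neg]
  have h1 := Real.exp_bound hb (n := 4) (by norm_num)
  have h2 := Real.exp_bound hnb (n := 4) (by norm_num)
  rw [show (Finset.range 4) = {0,1,2,3} by rfl] at h1 h2
  simp [Finset.sum_insert, Nat.factorial] at h1 h2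
  rw [abs_of_nonneg hb0] at h1 h2
  rw [Real.cosh_eq]
  rw [abs_le] at h1 h2 ⊢
  constructor <;> linarith [h1.1, h1.2, h2.1, h2.2]

private lemma KP_sinh_bound {b : ℝ} (hb0 : 0 ≤ b) (hb1 : b ≤ 1) :
    |Real.sinh b - (b + b ^ 3 / 6)| ≤ b ^ 4 * (5 / 96) := by
  have hb : |b| ≤ 1 := by rwa [abs_of_nonneg hb0]
  have hnb : |(-b)| ≤ 1 := by rwa [abs_neg]
  have h1 := Real.exp_bound hb (n := 4) (by norm_num)
  have h2 := Real.exp_bound hnb (n := 4) (by norm_num)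
  rw [show (Finset.range 4) = {0,1,2,3} by rfl] at h1 h2
  simp [Finset.sum_insert, Nat.factorial] at h1 h2
  rw [abs_of_nonneg hb0] at h1 h2
  rw [Real.sinh_eq]
  rw [abs_le] at h1 h2 ⊢
  constructor <;> linarith [h1.1, h1.2, h2.1, h2.2]

private lemma KP_key (a b c : ℝ) (ha : 0 < a) (hb : 0 < b) (ha1 : a ≤ 1) (hb1 : b ≤ 1)
    (h : (5 + |c|) * (a + b) ^ 4 < (b ^ 2 - a ^ 2) / 2 + c * (a * b)) :
    1 < Real.cos a * Real.cosh b + c * (Real.sin a * Real.sinh b) := by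
  have haa : |a| ≤ 1 := by rwa [abs_of_pos ha]
  have hca := Real.cos_bound haa
  have hsa := Real.sin_bound haa
  rw [abs_of_pos ha] at hca hsa
  rw [abs_le] at hca hsa
  have hcb := KP_cosh_bound hb.le hb1
  have hsb := KP_sinh_bound hb.le hb1
  rw [abs_le] at hcb hsb
  -- monomial facts
  have ha2 : a ^ 2 ≤ 1 := by nlinarith
  have hb2 : b ^ 2 ≤ 1 := by nlinarith
  have ha4 : a ^ 4 ≤ a ^ 3 := by nlinarith
  have hb4 : b ^ 4 ≤ b ^ 3 := by nlinarith
  have hab : a ≤ a + b := by linarith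
  have hbb : b ≤ a + b := by linarith
  have hm3 : a ^ 4 ≤ (a + b) ^ 4 := pow_le_pow_left₀ ha.le hab 4
  have hm4 : b ^ 4 ≤ (a + b) ^ 4 := pow_le_pow_left₀ hb.le hbb 4
  have hm2 : a ^ 2 * b ^ 2 ≤ (a + b) ^ 4 := by
    calc a ^ 2 * b ^ 2 = (a * b) ^ 2 := by ring
    _ ≤ ((a + b) * (a + b)) ^ 2 := pow_le_pow_left₀ (by positivity)
        (mul_le_mul hab hbb hb.le (by linarith)) 2
    _ = (a + b) ^ 4 := by ring
  have hm8 : a ^ 3 * b ≤ (a + b) ^ 4 := by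
    calc a ^ 3 * b ≤ (a + b) ^ 3 * (a + b) :=
      mul_le_mul (pow_le_pow_left₀ ha.le hab 3) hbb hb.le (by positivity)
    _ = (a + b) ^ 4 := by ring
  have hm9 : a * b ^ 3 ≤ (a + b) ^ 4 := by
    calc a * b ^ 3 ≤ (a + b) * (a + b) ^ 3 :=
      mul_le_mul hab (pow_le_pow_left₀ hb.le hbb 3) (by positivity) (by positivity)
    _ = (a + b) ^ 4 := by ring
  have hm5 : a ^ 4 * b ^ 2 ≤ (a + b) ^ 4 := by
    have t : a ^ 4 * b ^ 2 ≤ a ^ 4 := by nlinarith [pow_pos ha 4]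
    exact t.trans hm3
  have hm6 : a ^ 2 * b ^ 4 ≥ 0 := by positivity
  have hm7 : 0 ≤ a ^ 4 * b ^ 4 := by positivity
  -- cos * cosh lower bound
  have hcos_lo : 1 - a ^ 2 / 2 - a ^ 4 * (5 / 96) ≤ Real.cos a := by linarith [hca.1]
  have hcosh_lo : 1 + b ^ 2 / 2 - b ^ 4 * (5 / 96) ≤ Real.cosh b := by linarith [hcb.1]
  have hcos_pos : (0:ℝ) ≤ 1 - a ^ 2 / 2 - a ^ 4 * (5 / 96) := by nlinarith
  have hcosh_pos : (0:ℝ) ≤ 1 + b ^ 2 / 2 - b ^ 4 * (5 / 96) := by nlinarith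
  have pf : (1 - a ^ 2 / 2 - a ^ 4 * (5 / 96)) * (1 + b ^ 2 / 2 - b ^ 4 * (5 / 96))
      ≤ Real.cos a * Real.cosh b :=
    mul_le_mul hcos_lo hcosh_lo hcosh_pos (hcos_pos.trans hcos_lo)
  have pf' : 1 + (b ^ 2 - a ^ 2) / 2 - a ^ 2 * b ^ 2 / 4 - (5/96) * a ^ 4
      - (5/192) * a ^ 4 * b ^ 2 + (5/192) * a ^ 2 * b ^ 4 - (5/96) * b ^ 4
      + (25/9216) * a ^ 4 * b ^ 4 ≤ Real.cos a * Real.cosh b := by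
    have e : (1 - a ^ 2 / 2 - a ^ 4 * (5 / 96)) * (1 + b ^ 2 / 2 - b ^ 4 * (5 / 96))
        = 1 + (b ^ 2 - a ^ 2) / 2 - a ^ 2 * b ^ 2 / 4 - (5/96) * a ^ 4
      - (5/192) * a ^ 4 * b ^ 2 + (5/192) * a ^ 2 * b ^ 4 - (5/96) * b ^ 4
      + (25/9216) * a ^ 4 * b ^ 4 := by ring
    linarith [pf, e.ge, e.le]
  have hm10 : (0:ℝ) ≤ a ^ 3 * b := by positivity
  have hm11 : (0:ℝ) ≤ a * b ^ 3 := by positivity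
  have hprod1 : 1 + (b ^ 2 - a ^ 2) / 2 - 2 * (a + b) ^ 4 ≤ Real.cos a * Real.cosh b := by
    linarith [pf', hm2, hm3, hm4, hm5, hm6, hm7, hm10, hm11, pow_pos ha 4, pow_pos hb 4]
  -- sin * sinh bounds
  have hs_lo : a - a ^ 3 ≤ Real.sin a := by linarith [hsa.1, pow_le_pow_of_le_one ha.le ha1 (by norm_num : 3 ≤ 5), pow_pos ha 3]
  have hs_hi : Real.sin a ≤ a := by linarith [hsa.2, pow_le_pow_of_le_one ha.le ha1 (by norm_num : 3 ≤ 5), pow_pos ha 3]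
  have hs_lo_pos : (0:ℝ) ≤ a - a ^ 3 := by nlinarith
  have hsh_lo : b ≤ Real.sinh b := by linarith [hsb.1]
  have hsh_hi : Real.sinh b ≤ b + b ^ 3 := by linarith [hsb.2]
  have pl : (a - a ^ 3) * b ≤ Real.sin a * Real.sinh b :=
    mul_le_mul hs_lo hsh_lo hb.le (hs_lo_pos.trans hs_lo)
  have pu : Real.sin a * Real.sinh b ≤ a * (b + b ^ 3) :=
    mul_le_mul hs_hi hsh_hi (hb.le.trans hsh_lo) ha.le
  have hP : |Real.sin a * Real.sinh b - a * b| ≤ (a + b) ^ 4 := by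
    rw [abs_le]
    constructor <;> linarith [pl, pu, hm8, hm9, hm10, hm11, hm2, hm3, hm4]
  have hprod2 : c * (a * b) - |c| * (a + b) ^ 4 ≤ c * (Real.sin a * Real.sinh b) := by
    have h1 : -(|c| * |Real.sin a * Real.sinh b - a * b|)
        ≤ c * (Real.sin a * Real.sinh b - a * b) := by
      rw [← abs_mul]; exact neg_abs_le _
    have h2 : |c| * |Real.sin a * Real.sinh b - a * b| ≤ |c| * (a + b) ^ 4 :=
      mul_le_mul_of_nonneg_left hP (abs_nonneg c)
    linarith [h1, h2]
  have habc : (0:ℝ) ≤ (a + b) ^ 4 := by positivity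
  linarith [hprod1, hprod2, h, habc, abs_nonneg c]

/-- For energies below the threshold `E₀ = γV/(1+γ)`, the half-trace `Φ_N` of the
rescaled single-cell Kronig–Penney transfer matrix eventually exceeds 1. -/
theorem KP_phi_eventually_gt_one (γ L E V : ℝ) (hγ : 0 < γ) (hL : 0 < L) (hV : 0 < V)
    (E₀ : ℝ) (hE₀ : E₀ = γ * V / (1 + γ)) (hE : 0 < E) (hEE₀ : E < E₀)
    (k z : ℝ) (hk : k = Real.sqrt E) (hz : z = Real.sqrt (V - E))
    (δ lam Φ : ℕ → ℝ)
    (hδ : ∀ N, δ N = L / ((1 + γ) * N)) (hlam : ∀ N, lam N = γ * L / ((1 + γ) * N))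
    (hΦ : ∀ N, Φ N = Real.cos (k * δ N) * Real.cosh (z * lam N)
        + (z ^ 2 - k ^ 2) / (2 * k * z) * Real.sin (k * δ N) * Real.sinh (z * lam N)) :
    ∃ N₀ : ℕ, ∀ N ≥ N₀, 1 < Φ N := by
  have hγ1 : (0:ℝ) < 1 + γ := by linarith
  have hEV : E < V := by
    have h1 : E₀ < V := by rw [hE₀, div_lt_iff₀ hγ1]; nlinarith
    linarith
  have hk0 : 0 < k := by rw [hk]; exact Real.sqrt_pos.mpr hE
  have hz0 : 0 < z := by rw [hz]; exact Real.sqrt_pos.mpr (by linarith)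
  have hk2 : k ^ 2 = E := by rw [hk, sq_sqrt hE.le]
  have hz2 : z ^ 2 = V - E := by rw [hz, sq_sqrt (by linarith)]
  set c := (z ^ 2 - k ^ 2) / (2 * k * z) with hc
  have hgzk : 0 < γ * z ^ 2 - k ^ 2 := by
    have h1 : E * (1 + γ) < γ * V := by rw [hE₀, lt_div_iff₀ hγ1] at hEE₀; linarith
    rw [hz2, hk2]; nlinarith
  set Q := (1 + γ) * (γ * z ^ 2 - k ^ 2) / 2 with hQ
  have hQ0 : 0 < Q := div_pos (mul_pos hγ1 hgzk) two_pos
  set M := (5 + |c|) * (k + γ * z) ^ 4 with hM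
  have hM0 : 0 ≤ M := by positivity
  have hM1 : (0:ℝ) < M + 1 := by linarith
  set s₀ := min (min (1 / (k + 1)) (1 / (γ * z + 1))) (Real.sqrt (Q / (M + 1))) with hs₀def
  have hs₀ : 0 < s₀ := by
    refine lt_min (lt_min ?_ ?_) ?_
    · positivity
    · positivity
    · exact Real.sqrt_pos.mpr (div_pos hQ0 hM1)
  refine ⟨⌈L / ((1 + γ) * s₀)⌉₊ + 1, fun N hN => ?_⟩
  have hN1 : 1 ≤ N := le_trans (Nat.le_add_left 1 _) hN
  have hNpos : (0:ℝ) < N := by exact_mod_cast Nat.lt_of_lt_of_le Nat.zero_lt_one hN1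
  have hNx : L / ((1 + γ) * s₀) < (N:ℝ) := by
    calc L / ((1 + γ) * s₀) ≤ (⌈L / ((1 + γ) * s₀)⌉₊ : ℝ) := Nat.le_ceil _
    _ < ((⌈L / ((1 + γ) * s₀)⌉₊ + 1 : ℕ) : ℝ) := by push_cast; linarith
    _ ≤ (N : ℝ) := by exact_mod_cast hN
  set s := L / ((1 + γ) * (N:ℝ)) with hs
  have hspos : 0 < s := div_pos hL (mul_pos hγ1 hNpos)
  have hss₀ : s < s₀ := by
    rw [hs, div_lt_iff₀ (mul_pos hγ1 hNpos)]
    rw [div_lt_iff₀ (mul_pos hγ1 hs₀)] at hNx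
    nlinarith
  have hδN : δ N = s := by rw [hδ]
  have hlamN : lam N = γ * s := by rw [hlam, hs]; ring
  -- bounds a ≤ 1, b ≤ 1
  have hks1 : k * s ≤ 1 := by
    have h1 : s₀ ≤ 1 / (k + 1) := (min_le_left _ _).trans (min_le_left _ _)
    have h2 : s * (k + 1) ≤ 1 := by
      rw [← le_div_iff₀ (by linarith : (0:ℝ) < k + 1)]; linarith
    nlinarith
  have hzs1 : z * (γ * s) ≤ 1 := by
    have h1 : s₀ ≤ 1 / (γ * z + 1) := (min_le_left _ _).trans (min_le_right _ _)
    have h2 : s * (γ * z + 1) ≤ 1 := by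
      rw [← le_div_iff₀ (by positivity : (0:ℝ) < γ * z + 1)]; linarith
    nlinarith
  -- main smallness inequality
  have hs2 : s ^ 2 < Q / (M + 1) := by
    have h3 : s < Real.sqrt (Q / (M + 1)) := lt_of_lt_of_le hss₀ (min_le_right _ _)
    exact (Real.lt_sqrt hspos.le).mp h3
  have h4 : (M + 1) * s ^ 2 < Q := by
    rw [lt_div_iff₀ hM1] at hs2; linarith
  have hMQ : M * s ^ 4 < Q * s ^ 2 := by
    nlinarith [mul_pos (sub_pos.mpr h4) (mul_pos hspos hspos), pow_pos hspos 4,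
      mul_pos hspos hspos]
  have hmain : (5 + |c|) * (k * s + z * (γ * s)) ^ 4
      < ((z * (γ * s)) ^ 2 - (k * s) ^ 2) / 2 + c * ((k * s) * (z * (γ * s))) := by
    have hL4 : (5 + |c|) * (k * s + z * (γ * s)) ^ 4 = M * s ^ 4 := by rw [hM]; ring
    have hR2 : ((z * (γ * s)) ^ 2 - (k * s) ^ 2) / 2 + c * ((k * s) * (z * (γ * s)))
        = Q * s ^ 2 := by
      rw [hc, hQ]; field_simp; ring
    rw [hL4, hR2]; exact hMQ
  have key := KP_key (k * s) (z * (γ * s)) c (by positivity) (by positivity) hks1 hzs1 hmain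
  rw [hΦ, hδN, hlamN]
  nlinarith [key]
end

section
/- Fix γ, L, V > 0 and E₀ = γV/(1+γ). Let ξ be a real number and define E(ξ) = E₀ + ξ². Then for the sequences δ_N = L/((1+γ)N), λ_N = γL/((1+γ)N), p_N = δ_N + λ_N = L/N, with k_N = √(E(ξ)) and z_N = √(V − E(ξ)) (assuming E(ξ) < V), the dispersion defect D_N := [cos(k_N δ_N)cosh(z_N λ_N) + ((z_N²−k_N²)/(2 k_N z_N))sin(k_N δ_N)sinh(z_N λ_N)] − cos(ξ p_N) satisfies N²·D_N → 0 as N → ∞. -/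
open Real Filter

/-- If `f 0 = 0`, `f' = g` everywhere, `g 0 = 0` and `g` has derivative `0` at `0`,
then `f t / t ^ 2 → 0` as `t → 0` (punctured). -/
lemma quad_littleO (f g : ℝ → ℝ) (hfg : ∀ t, HasDerivAt f (g t) t)
    (hf0 : f 0 = 0) (hg0 : g 0 = 0) (hg' : HasDerivAt g 0 0) :
    Tendsto (fun t => f t / t ^ 2) (nhdsWithin (0:ℝ) {0}ᶜ) (nhds 0) := by
  have hslope : Tendsto (slope g 0) (nhdsWithin (0:ℝ) {0}ᶜ) (nhds 0) :=
    hasDerivAt_iff_tendsto_slope.mp hg'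
  rw [Metric.tendsto_nhdsWithin_nhds] at hslope ⊢
  intro ε hε
  obtain ⟨δ, hδ, hδ'⟩ := hslope ε hε
  refine ⟨δ, hδ, ?_⟩
  intro t ht htδ
  have ht0 : t ≠ 0 := ht
  have htδ' : |t| < δ := by simpa [Real.dist_eq] using htδ
  have hcont : ∀ s : Set ℝ, ContinuousOn f s := fun s x _ =>
    (hfg x).continuousAt.continuousWithinAt
  have key : ∃ c : ℝ, c ≠ 0 ∧ |c| < |t| ∧ g c = f t / t := by
    rcases lt_or_gt_of_ne ht0 with h | h
    · obtain ⟨c, hc, hgc⟩ := exists_hasDerivAt_eq_slope f g h (hcont _) (fun x _ => hfg x)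
      refine ⟨c, ne_of_lt hc.2, ?_, ?_⟩
      · rw [abs_of_neg hc.2, abs_of_neg h]; linarith [hc.1]
      · rw [hgc, hf0, zero_sub, zero_sub, neg_div_neg_eq]
    · obtain ⟨c, hc, hgc⟩ := exists_hasDerivAt_eq_slope f g h (hcont _) (fun x _ => hfg x)
      refine ⟨c, ne_of_gt hc.1, ?_, ?_⟩
      · rw [abs_of_pos hc.1, abs_of_pos h]; exact hc.2
      · rw [hgc, hf0, sub_zero, sub_zero]
  obtain ⟨c, hc0, hct, hgc⟩ := key
  have hcδ : dist c 0 < δ := by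
    rw [Real.dist_eq, sub_zero]; exact lt_trans hct htδ'
  have hgcε : dist (slope g 0 c) 0 < ε := hδ' (by simpa using hc0) hcδ
  have hsl : slope g 0 c = g c / c := by simp [slope_def_field, hg0, div_eq_iff, hc0]
  have hgcabs : |g c| < ε * |c| := by
    rw [hsl, Real.dist_eq, sub_zero, abs_div] at hgcε
    calc |g c| = |g c| / |c| * |c| := by field_simp
    _ < ε * |c| := by
        apply mul_lt_mul_of_pos_right hgcε (abs_pos.mpr hc0)
  have hft : f t / t ^ 2 = g c / t := by
    rw [hgc, pow_two, div_div]
  rw [Real.dist_eq, sub_zero, hft, abs_div]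
  rw [div_lt_iff₀ (abs_pos.mpr ht0)]
  exact lt_trans hgcabs (mul_lt_mul_of_pos_left hct hε)

/-- The continuum-limit dispersion relation `E(ξ) = E₀ + ξ²`: the dispersion defect
`D_N = Φ_N − cos(ξ p_N)` at energy `E₀ + ξ²` satisfies `N² D_N → 0`. -/
theorem KP_dispersion_continuum_limit (γ L V : ℝ) (hγ : 0 < γ) (hL : 0 < L) (hV : 0 < V)
    (E₀ : ℝ) (hE₀ : E₀ = γ * V / (1 + γ)) (ξ : ℝ) (hξ : E₀ + ξ ^ 2 < V)
    (k z : ℝ) (hk : k = Real.sqrt (E₀ + ξ ^ 2)) (hz : z = Real.sqrt (V - E₀ - ξ ^ 2))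
    (δ lam p D : ℕ → ℝ)
    (hδ : ∀ N, δ N = L / ((1 + γ) * N)) (hlam : ∀ N, lam N = γ * L / ((1 + γ) * N))
    (hp : ∀ N, p N = L / N)
    (hD : ∀ N, D N = (Real.cos (k * δ N) * Real.cosh (z * lam N)
        + (z ^ 2 - k ^ 2) / (2 * k * z) * Real.sin (k * δ N) * Real.sinh (z * lam N))
      - Real.cos (ξ * p N)) :
    Tendsto (fun N : ℕ => (N : ℝ) ^ 2 * D N) atTop (nhds 0) := by
  have h1γ : (0:ℝ) < 1 + γ := by linarith
  have h1γ' : (1:ℝ) + γ ≠ 0 := ne_of_gt h1γ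
  have hE₀pos : 0 < E₀ := by rw [hE₀]; positivity
  have hkpos : 0 < k := by rw [hk]; exact Real.sqrt_pos.mpr (by positivity)
  have hzpos : 0 < z := by rw [hz]; exact Real.sqrt_pos.mpr (by linarith)
  have hk2 : k ^ 2 = E₀ + ξ ^ 2 := by rw [hk, sq_sqrt (by positivity)]
  have hz2 : z ^ 2 = V - E₀ - ξ ^ 2 := by rw [hz, sq_sqrt (by linarith)]
  set A : ℝ := k / (1 + γ) with hA
  set B : ℝ := γ * z / (1 + γ) with hB
  set C : ℝ := (z ^ 2 - k ^ 2) / (2 * k * z) with hC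
  set f : ℝ → ℝ := fun t => Real.cos (A * t) * Real.cosh (B * t)
      + C * Real.sin (A * t) * Real.sinh (B * t) - Real.cos (ξ * t) with hf
  set g : ℝ → ℝ := fun t => -A * (Real.sin (A * t) * Real.cosh (B * t))
      + B * (Real.cos (A * t) * Real.sinh (B * t))
      + C * A * (Real.cos (A * t) * Real.sinh (B * t))
      + C * B * (Real.sin (A * t) * Real.cosh (B * t))
      + ξ * Real.sin (ξ * t) with hg
  have hlin : ∀ (a t : ℝ), HasDerivAt (fun s => a * s) a t := by
    intro a t; simpa using (hasDerivAt_id t).const_mul a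
  have hfg : ∀ t, HasDerivAt f (g t) t := by
    intro t
    have H : HasDerivAt f
        ((-Real.sin (A * t) * A) * Real.cosh (B * t)
          + Real.cos (A * t) * (Real.sinh (B * t) * B)
          + ((C * (Real.cos (A * t) * A)) * Real.sinh (B * t)
            + C * Real.sin (A * t) * (Real.cosh (B * t) * B))
          - (-Real.sin (ξ * t) * ξ)) t := by
      exact ((((hlin A t).cos.mul (hlin B t).cosh).add
        ((((hlin A t).sin.const_mul C).mul (hlin B t).sinh))).sub (hlin ξ t).cos)
    convert H using 1
    simp only [hg]; ring
  have hf0 : f 0 = 0 := by simp [hf]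
  have hg0 : g 0 = 0 := by simp [hg]
  have hg' : HasDerivAt g 0 0 := by
    have t1 := ((hlin A 0).sin.mul (hlin B 0).cosh).const_mul (-A)
    have t2 := ((hlin A 0).cos.mul (hlin B 0).sinh).const_mul B
    have t3 := ((hlin A 0).cos.mul (hlin B 0).sinh).const_mul (C * A)
    have t4 := ((hlin A 0).sin.mul (hlin B 0).cosh).const_mul (C * B)
    have t5 := (hlin ξ 0).sin.const_mul ξ
    have H := (((t1.add t2).add t3).add t4).add t5
    have : HasDerivAt g (-A * (1 * A * 1 + 0 * (0 * B)) + B * (-0 * A * 0 + 1 * (1 * B))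
        + C * A * (-0 * A * 0 + 1 * (1 * B)) + C * B * (1 * A * 1 + 0 * (0 * B))
        + ξ * (1 * ξ)) 0 := by
      convert H using 2
      · rfl
      · rfl
      · funext y; simp only [hg, Pi.add_apply, Pi.mul_apply]
      all_goals
        simp [Real.sin_zero, Real.cos_zero, Real.sinh_zero, Real.cosh_zero]
    have hval : (-A * (1 * A * 1 + 0 * (0 * B)) + B * (-0 * A * 0 + 1 * (1 * B))
        + C * A * (-0 * A * 0 + 1 * (1 * B)) + C * B * (1 * A * 1 + 0 * (0 * B))
        + ξ * (1 * ξ)) = 0 := by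
      have hkey : -k ^ 2 + γ * z ^ 2 + (1 + γ) * ξ ^ 2 = 0 := by
        rw [hk2, hz2, hE₀]; field_simp; try ring
      rw [hA, hB, hC]
      field_simp
      linear_combination (2 * k * z * (1 + γ)) * hkey
    rwa [hval] at this
  have hmain := quad_littleO f g hfg hf0 hg0 hg'
  have htend : Tendsto (fun N : ℕ => L / N) atTop (nhdsWithin (0:ℝ) {0}ᶜ) := by
    rw [tendsto_nhdsWithin_iff]
    refine ⟨tendsto_const_div_atTop_nhds_zero_nat L, ?_⟩
    filter_upwards [eventually_ge_atTop 1] with N hN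
    have : (0:ℝ) < N := by exact_mod_cast hN
    simp only [Set.mem_compl_iff, Set.mem_singleton_iff]
    positivity
  have hcomp : Tendsto (fun N : ℕ => L ^ 2 * (f (L / N) / (L / N) ^ 2)) atTop (nhds 0) := by
    have := (hmain.comp htend).const_mul (L ^ 2)
    simpa using this
  refine hcomp.congr' ?_
  filter_upwards [eventually_ge_atTop 1] with N hN
  have hN0 : (0:ℝ) < N := by exact_mod_cast hN
  have hDf : D N = f (L / N) := by
    rw [hD, hf]
    have e1 : k * δ N = A * (L / N) := by rw [hδ, hA]; field_simp; try ring
    have e2 : z * lam N = B * (L / N) := by rw [hlam, hB]; field_simp; try ring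
    have e3 : ξ * p N = ξ * (L / N) := by rw [hp]
    rw [e1, e2, e3, hC]
  rw [hDf]
  field_simp
  try ring
end
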